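/- The quantity k = [α₁(w₂² - w₃²) + α₂(w₃² - w₁²) + α₃(w₁² - w₂²)] / [8(α₁-α₂)(α₂-α₃)(α₃-α₁)] is a first integral of the diagonal anti-self-dual system: its derivative along any solution with (α₁-α₂)(α₂-α₃)(α₃-α₁) ≠ 0 is zero. -/

import Mathlib

/-- The quantity k is a first integral of the diagonal anti-self-dual system. -/
theorem first_integral_diagonal_asd
    (w₁ w₂ w₃ α₁ α₂ α₃ : ℝ → ℝ)
    (hw₁ : ∀ t, HasDerivAt w₁ (-(w₂ t * w₃ t) + w₁ t * (α₂ t + α₃ t)) t)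
    (hw₂ : ∀ t, HasDerivAt w₂ (-(w₃ t * w₁ t) + w₂ t * (α₃ t + α₁ t)) t)
    (hw₃ : ∀ t, HasDerivAt w₃ (-(w₁ t * w₂ t) + w₃ t * (α₁ t + α₂ t)) t)
    (hα₁ : ∀ t, HasDerivAt α₁ (-(α₂ t * α₃ t) + α₁ t * (α₂ t + α₃ t)) t)
    (hα₂ : ∀ t, HasDerivAt α₂ (-(α₃ t * α₁ t) + α₂ t * (α₃ t + α₁ t)) t)
    (hα₃ : ∀ t, HasDerivAt α₃ (-(α₁ t * α₂ t) + α₃ t * (α₁ t + α₂ t)) t)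
    (hne : ∀ t, (α₁ t - α₂ t) * (α₂ t - α₃ t) * (α₃ t - α₁ t) ≠ 0) :
    ∀ t, HasDerivAt
      (fun s =>
        (α₁ s * ((w₂ s)^2 - (w₃ s)^2) + α₂ s * ((w₃ s)^2 - (w₁ s)^2)
          + α₃ s * ((w₁ s)^2 - (w₂ s)^2)) /
        (8 * (α₁ s - α₂ s) * (α₂ s - α₃ s) * (α₃ s - α₁ s)))
      0 t := by
  intro t
  have hD : (8 : ℝ) * (α₁ t - α₂ t) * (α₂ t - α₃ t) * (α₃ t - α₁ t) ≠ 0 := by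
    have := hne t
    intro h
    apply this
    nlinarith [sq_nonneg ((α₁ t - α₂ t) * (α₂ t - α₃ t) * (α₃ t - α₁ t))]
  have hN : HasDerivAt
      (fun s => α₁ s * ((w₂ s)^2 - (w₃ s)^2) + α₂ s * ((w₃ s)^2 - (w₁ s)^2)
          + α₃ s * ((w₁ s)^2 - (w₂ s)^2))
      ((-(α₂ t * α₃ t) + α₁ t * (α₂ t + α₃ t)) * ((w₂ t)^2 - (w₃ t)^2)
        + α₁ t * (2 * w₂ t * (-(w₃ t * w₁ t) + w₂ t * (α₃ t + α₁ t))
                  - 2 * w₃ t * (-(w₁ t * w₂ t) + w₃ t * (α₁ t + α₂ t)))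
       + ((-(α₃ t * α₁ t) + α₂ t * (α₃ t + α₁ t)) * ((w₃ t)^2 - (w₁ t)^2)
        + α₂ t * (2 * w₃ t * (-(w₁ t * w₂ t) + w₃ t * (α₁ t + α₂ t))
                  - 2 * w₁ t * (-(w₂ t * w₃ t) + w₁ t * (α₂ t + α₃ t))))
       + ((-(α₁ t * α₂ t) + α₃ t * (α₁ t + α₂ t)) * ((w₁ t)^2 - (w₂ t)^2)
        + α₃ t * (2 * w₁ t * (-(w₂ t * w₃ t) + w₁ t * (α₂ t + α₃ t))
                  - 2 * w₂ t * (-(w₃ t * w₁ t) + w₂ t * (α₃ t + α₁ t))))) t := by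
    have h1 := ((hα₁ t).mul (((hw₂ t).pow 2).sub ((hw₃ t).pow 2)))
    have h2 := ((hα₂ t).mul (((hw₃ t).pow 2).sub ((hw₁ t).pow 2)))
    have h3 := ((hα₃ t).mul (((hw₁ t).pow 2).sub ((hw₂ t).pow 2)))
    have := (h1.add h2).add h3
    convert this using 1
    · rfl
    · rfl
    · rfl
    · simp only [Pi.pow_apply, Pi.sub_apply]
      norm_num
  have hDd : HasDerivAt
      (fun s => 8 * (α₁ s - α₂ s) * (α₂ s - α₃ s) * (α₃ s - α₁ s))
      (8 * (((-(α₂ t * α₃ t) + α₁ t * (α₂ t + α₃ t)) - (-(α₃ t * α₁ t) + α₂ t * (α₃ t + α₁ t))) * ((α₂ t - α₃ t) * (α₃ t - α₁ t))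
        + (α₁ t - α₂ t) * (((-(α₃ t * α₁ t) + α₂ t * (α₃ t + α₁ t)) - (-(α₁ t * α₂ t) + α₃ t * (α₁ t + α₂ t))) * (α₃ t - α₁ t)
          + (α₂ t - α₃ t) * ((-(α₁ t * α₂ t) + α₃ t * (α₁ t + α₂ t)) - (-(α₂ t * α₃ t) + α₁ t * (α₂ t + α₃ t)))))) t := by
    have h12 := (hα₁ t).sub (hα₂ t)
    have h23 := (hα₂ t).sub (hα₃ t)
    have h31 := (hα₃ t).sub (hα₁ t)
    have := ((h12.const_mul (8:ℝ)).mul h23).mul h31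
    convert this using 1
    · rfl
    · rfl
    · rfl
    · simp only [Pi.sub_apply, Pi.mul_apply]
      ring
  have := hN.div hDd hD
  convert this using 1
  · rfl
  · rfl
  · rfl
  · field_simp
    ring
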